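/- For integers a ≥ 0, i ≥ 1, s ≥ 0: the sum over r from 1 to i of C_q(i-1, r-1) · C_q(r+s+a-1, s-1) · q^{binom(r,2)+r-i·r} · (-1)^{i-r} equals q^{binom(i,2)+(i-1)·a} · C_q(s+a, i+a), where C_q denotes the Gaussian binomial coefficient and binom(n,2) = n(n-1)/2. -/

import Mathlib

open Finset

/-- The indeterminate `q`, an element of the field of rational functions `ℚ(q)`. -/
noncomputable def q : RatFunc ℚ := RatFunc.X

/-- The `q`-integer `[n]_q = 1 + q + ⋯ + q^{n-1}`. -/
noncomputable def qint (n : ℕ) : RatFunc ℚ := ∑ i ∈ Finset.range n, q ^ i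

/-- The `q`-factorial `[n]_q!`. -/
noncomputable def qfact (n : ℕ) : RatFunc ℚ := ∏ i ∈ Finset.range n, qint (i + 1)

/-- The Gaussian binomial coefficient `C_q(n, k)`, zero unless `0 ≤ k ≤ n`. -/
noncomputable def qbinom (n k : ℤ) : RatFunc ℚ :=
  if 0 ≤ k ∧ k ≤ n then qfact n.toNat / (qfact k.toNat * qfact (n - k).toNat) else 0

lemma q_ne_zero : q ≠ 0 := RatFunc.X_ne_zero

lemma qint_ne_zero {n : ℕ} (h : n ≠ 0) : qint n ≠ 0 := by
  have heq : qint n = algebraMap (Polynomial ℚ) (RatFunc ℚ) (∑ i ∈ Finset.range n, Polynomial.X ^ i) := by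
    rw [map_sum]
    exact Finset.sum_congr rfl fun i _ => by rw [map_pow, RatFunc.algebraMap_X]; rfl
  rw [heq]
  apply RatFunc.algebraMap_ne_zero
  intro hzero
  have := congrArg (Polynomial.eval 1) hzero
  simp [Polynomial.eval_finset_sum] at this
  exact h this

lemma qfact_ne_zero (n : ℕ) : qfact n ≠ 0 :=
  Finset.prod_ne_zero_iff.mpr fun i _ => qint_ne_zero (Nat.succ_ne_zero i)

lemma qint_add (a b : ℕ) : qint (a + b) = qint a + q ^ a * qint b := by
  unfold qint
  rw [Finset.sum_range_add, Finset.mul_sum]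
  congr 1
  exact Finset.sum_congr rfl fun i _ => by rw [pow_add]

lemma qfact_succ (n : ℕ) : qfact (n + 1) = qfact n * qint (n + 1) :=
  Finset.prod_range_succ _ _

lemma qbinom_eq_zero {n k : ℤ} (h : k < 0 ∨ n < k) : qbinom n k = 0 := by
  unfold qbinom
  rw [if_neg]
  omega

lemma qbinom_nat (n k : ℕ) (h : k ≤ n) :
    qbinom n k = qfact n / (qfact k * qfact (n - k)) := by
  unfold qbinom
  rw [if_pos (by constructor <;> omega)]
  have h1 : ((n : ℤ)).toNat = n := by omega
  have h2 : ((k : ℤ)).toNat = k := by omega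
  have h3 : ((n : ℤ) - k).toNat = n - k := by omega
  rw [h1, h2, h3]

lemma qfact_zero : qfact 0 = 1 := rfl

lemma central (b c : ℕ) :
    qfact (b + c + 2) / (qfact (b + 1) * qfact (c + 1))
      = qfact (b + c + 1) / (qfact b * qfact (c + 1))
        + q ^ (b + 1) * (qfact (b + c + 1) / (qfact (b + 1) * qfact c)) := by
  have h1 : qfact (b + c + 2) = qfact (b + c + 1) * qint (b + c + 2) := qfact_succ _
  have h2 : qfact (b + 1) = qfact b * qint (b + 1) := qfact_succ b
  have h3 : qfact (c + 1) = qfact c * qint (c + 1) := qfact_succ c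
  have h4 : qint (b + c + 2) = qint (b + 1) + q ^ (b + 1) * qint (c + 1) := by
    have := qint_add (b + 1) (c + 1)
    rwa [show b + 1 + (c + 1) = b + c + 2 by ring] at this
  rw [h1, h2, h3, h4]
  have hb := qfact_ne_zero b
  have hc := qfact_ne_zero c
  have hib : qint (b + 1) ≠ 0 := qint_ne_zero (Nat.succ_ne_zero b)
  have hic : qint (c + 1) ≠ 0 := qint_ne_zero (Nat.succ_ne_zero c)
  field_simp

lemma qbinom_zero {n : ℤ} (h : 0 ≤ n) : qbinom n 0 = 1 := by
  unfold qbinom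
  rw [if_pos ⟨le_refl 0, h⟩]
  simp only [Int.toNat_zero, qfact_zero, one_mul, sub_zero]
  exact div_self (qfact_ne_zero _)

lemma qbinom_self (n : ℕ) : qbinom n n = 1 := by
  rw [qbinom_nat n n le_rfl, Nat.sub_self, qfact_zero, mul_one]
  exact div_self (qfact_ne_zero _)

/-- Pascal: `C(n+1, j) = C(n, j-1) + q^j C(n, j)` for all `j : ℕ`. -/
lemma pascalA (n j : ℕ) :
    qbinom ((n : ℤ) + 1) j = qbinom n ((j : ℤ) - 1) + q ^ j * qbinom n j := by
  rcases Nat.eq_zero_or_pos j with rfl | hj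
  · push_cast
    rw [qbinom_zero (by omega), qbinom_zero (by omega), qbinom_eq_zero (by omega)]
    norm_num
  rcases le_or_gt j n with hle | hlt
  · -- 1 ≤ j ≤ n : generic case
    obtain ⟨b, rfl⟩ : ∃ b, j = b + 1 := ⟨j - 1, by omega⟩
    obtain ⟨c, rfl⟩ : ∃ c, n = b + 1 + c := ⟨n - (b + 1), by omega⟩
    have e1 : ((b + 1 + c : ℕ) : ℤ) + 1 = ((b + c + 2 : ℕ) : ℤ) := by push_cast; ring
    have e2 : ((b + 1 : ℕ) : ℤ) - 1 = ((b : ℕ) : ℤ) := by push_cast; ring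
    rw [e1, e2, qbinom_nat _ _ (by omega), qbinom_nat _ _ (by omega),
      qbinom_nat _ _ (by omega)]
    have e3 : b + c + 2 - (b + 1) = c + 1 := by omega
    have e4 : b + 1 + c - b = c + 1 := by omega
    have e5 : b + 1 + c - (b + 1) = c := by omega
    have e6 : b + 1 + c = b + c + 1 := by omega
    rw [e3, e4, e5, e6]
    exact central b c
  rcases Nat.eq_or_lt_of_le hlt with rfl | hlt2
  · -- j = n + 1
    have : qbinom ((n:ℤ)+1) ((n+1 : ℕ) : ℤ) = qbinom ((n+1 : ℕ) : ℤ) ((n+1:ℕ) : ℤ) := by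
      norm_num
    push_cast
    rw [show ((n:ℤ)+1) = (((n+1 : ℕ)) : ℤ) by push_cast; ring] 
    rw [qbinom_self (n+1)]
    push_cast
    rw [show (n : ℤ) + 1 - 1 = ((n : ℕ) : ℤ) by ring, qbinom_self n,
      qbinom_eq_zero (Or.inr (show (n:ℤ) < (n:ℤ)+1 by omega))]
    ring
  · -- j > n + 1
    rw [qbinom_eq_zero (by omega), qbinom_eq_zero (by omega), qbinom_eq_zero (by omega)]
    ring

/-- Difference form of Pascal: `C(n,k) - C(n-1,k) = q^{n-k} C(n-1,k-1)` for `0 ≤ k < n`. -/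
lemma qbinom_diff (n k : ℤ) (hk : 0 ≤ k) (hn : k + 1 ≤ n) :
    qbinom n k = qbinom (n - 1) k + q ^ (n - k) * qbinom (n - 1) (k - 1) := by
  rcases eq_or_lt_of_le hk with rfl | hk1
  · rw [qbinom_zero (by omega), qbinom_zero (by omega), qbinom_eq_zero (by omega)]
    ring
  · -- 1 ≤ k ≤ n - 1
    obtain ⟨b, hb⟩ : ∃ b : ℕ, k = (b : ℤ) + 1 := ⟨(k - 1).toNat, by omega⟩
    obtain ⟨c, hc⟩ : ∃ c : ℕ, n = (b : ℤ) + c + 2 := ⟨(n - k - 1).toNat, by omega⟩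
    subst hb hc
    have e1 : (b : ℤ) + c + 2 = ((b + c + 2 : ℕ) : ℤ) := by push_cast; ring
    have e2 : (b : ℤ) + c + 2 - 1 = ((b + c + 1 : ℕ) : ℤ) := by push_cast; ring
    have e3 : (b : ℤ) + 1 = ((b + 1 : ℕ) : ℤ) := by push_cast; ring
    have e4 : (b : ℤ) + 1 - 1 = ((b : ℕ) : ℤ) := by ring
    have e5 : (b : ℤ) + c + 2 - ((b : ℤ) + 1) = ((c + 1 : ℕ) : ℤ) := by push_cast; ring
    rw [e5, e2, e4, e3, e1, qbinom_nat _ _ (by omega), qbinom_nat _ _ (by omega),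
      qbinom_nat _ _ (by omega), zpow_natCast]
    have f1 : b + c + 2 - (b + 1) = c + 1 := by omega
    have f2 : b + c + 1 - (b + 1) = c := by omega
    have f3 : b + c + 1 - b = c + 1 := by omega
    rw [f1, f2, f3]
    have := central c b
    rw [show c + b + 2 = b + c + 2 by ring, show c + b + 1 = b + c + 1 by ring] at this
    linear_combination this

lemma qbinom_symm (n : ℕ) (k : ℤ) : qbinom n ((n : ℤ) - k) = qbinom n k := by
  by_cases h : 0 ≤ k ∧ k ≤ n
  · obtain ⟨k', rfl⟩ : ∃ k' : ℕ, (k' : ℤ) = k := ⟨k.toNat, by omega⟩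
    have hk' : k' ≤ n := by exact_mod_cast h.2
    rw [show (n : ℤ) - k' = ((n - k' : ℕ) : ℤ) by omega,
      qbinom_nat _ _ (by omega), qbinom_nat _ _ hk',
      show n - (n - k') = k' by omega, mul_comm]
  · rw [qbinom_eq_zero (by omega), qbinom_eq_zero (by omega)]

lemma choose_succ_two (j : ℕ) : (j + 1).choose 2 = j.choose 2 + j := by
  simp [Nat.choose_succ_succ, Nat.choose_one_right]
  omega

lemma key (m : ℕ) : ∀ N k : ℤ, (m : ℤ) + 1 ≤ N - k →
    ∑ j ∈ Finset.range (m + 1),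
      (-1 : RatFunc ℚ) ^ j * q ^ (j.choose 2) * qbinom (m : ℤ) (j : ℤ) * qbinom (N - j) k
      = q ^ ((m : ℤ) * (N - k)) * qbinom (N - m) (k - m) := by
  induction m with
  | zero =>
    intro N k _
    rw [show (0:ℕ) + 1 = 1 from rfl, Finset.sum_range_one]
    norm_num
    rw [qbinom_zero (le_refl 0), one_mul]
  | succ m ih =>
    intro N k h
    rcases lt_or_ge k 0 with hk | hk
    · rw [qbinom_eq_zero (Or.inl (by omega)), mul_zero]
      apply Finset.sum_eq_zero
      intro j _
      rw [qbinom_eq_zero (Or.inl hk), mul_zero]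
    · have hq := q_ne_zero
      have step1 : ∀ j ∈ Finset.range (m + 2),
          (-1 : RatFunc ℚ) ^ j * q ^ (j.choose 2) * qbinom (↑(m + 1)) (j : ℤ) * qbinom (N - j) k
          = ((-1 : RatFunc ℚ) ^ j * q ^ (j.choose 2) * qbinom (m : ℤ) ((j : ℤ) - 1) * qbinom (N - j) k)
            + ((-1 : RatFunc ℚ) ^ j * (q ^ (j.choose 2) * q ^ j) * qbinom (m : ℤ) (j : ℤ) * qbinom (N - j) k) := by
        intro j _
        rw [show ((m + 1 : ℕ) : ℤ) = (m : ℤ) + 1 by push_cast; ring, pascalA m j]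
        ring
      rw [Finset.sum_congr rfl step1, Finset.sum_add_distrib]
      have sum2 : ∑ j ∈ Finset.range (m + 2),
          (-1 : RatFunc ℚ) ^ j * (q ^ (j.choose 2) * q ^ j) * qbinom (m : ℤ) (j : ℤ) * qbinom (N - j) k
          = ∑ j ∈ Finset.range (m + 1),
            (-1 : RatFunc ℚ) ^ j * q ^ ((j + 1).choose 2) * qbinom (m : ℤ) (j : ℤ) * qbinom (N - j) k := by
        rw [Finset.sum_range_succ, qbinom_eq_zero (Or.inr (by exact_mod_cast Nat.lt_succ_self m))]
        rw [mul_zero, zero_mul, add_zero]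
        refine Finset.sum_congr rfl fun j _ => ?_
        rw [choose_succ_two, pow_add]
      have sum1 : ∑ j ∈ Finset.range (m + 2),
          (-1 : RatFunc ℚ) ^ j * q ^ (j.choose 2) * qbinom (m : ℤ) ((j : ℤ) - 1) * qbinom (N - j) k
          = ∑ j ∈ Finset.range (m + 1),
            -((-1 : RatFunc ℚ) ^ j * q ^ ((j + 1).choose 2) * qbinom (m : ℤ) (j : ℤ) * qbinom (N - (j : ℤ) - 1) k) := by
        rw [Finset.sum_range_succ']
        rw [show ((0 : ℕ) : ℤ) - 1 = -1 by norm_num, qbinom_eq_zero (Or.inl (by norm_num))]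
        rw [mul_zero, zero_mul, add_zero]
        refine Finset.sum_congr rfl fun j _ => ?_
        have c1 : ((j + 1 : ℕ) : ℤ) - 1 = (j : ℤ) := by push_cast; ring
        have c2 : N - ((j + 1 : ℕ) : ℤ) = N - (j : ℤ) - 1 := by push_cast; ring
        rw [c1, c2, pow_succ]
        ring
      rw [sum1, sum2, ← Finset.sum_add_distrib]
      have step2 : ∀ j ∈ Finset.range (m + 1),
          -((-1 : RatFunc ℚ) ^ j * q ^ ((j + 1).choose 2) * qbinom (m : ℤ) (j : ℤ) * qbinom (N - (j : ℤ) - 1) k)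
            + (-1 : RatFunc ℚ) ^ j * q ^ ((j + 1).choose 2) * qbinom (m : ℤ) (j : ℤ) * qbinom (N - (j : ℤ)) k
          = q ^ (N - k) * ((-1 : RatFunc ℚ) ^ j * q ^ (j.choose 2) * qbinom (m : ℤ) (j : ℤ) * qbinom ((N - 1) - (j : ℤ)) (k - 1)) := by
        intro j hj
        have hj' : (j : ℤ) ≤ m := by
          have := Finset.mem_range.mp hj
          omega
        have hNk : (m : ℤ) + 2 ≤ N - k := by push_cast at h; omega
        have hdiff := qbinom_diff (N - (j : ℤ)) k hk (by omega)
        rw [hdiff]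
        have hc := choose_succ_two j
        have hpow : (q : RatFunc ℚ) ^ ((j + 1).choose 2) * q ^ (N - (j : ℤ) - k)
            = q ^ (N - k) * q ^ (j.choose 2) := by
          rw [← zpow_natCast q ((j + 1).choose 2), ← zpow_natCast q (j.choose 2),
            ← zpow_add₀ hq, ← zpow_add₀ hq]
          congr 1
          omega
        rw [show N - (j : ℤ) - 1 = (N - 1) - (j : ℤ) by ring]
        linear_combination ((-1 : RatFunc ℚ) ^ j * qbinom (m : ℤ) (j : ℤ)
          * qbinom ((N - 1) - (j : ℤ)) (k - 1)) * hpow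
      rw [Finset.sum_congr rfl step2, ← Finset.mul_sum]
      rw [ih (N - 1) (k - 1) (by push_cast at h ⊢; omega)]
      rw [← mul_assoc, ← zpow_add₀ hq]
      congr 1
      · congr 1
        push_cast
        ring
      · congr 1 <;> push_cast <;> ring

lemma two_choose_two (n : ℕ) : (n : ℤ) * ((n : ℤ) - 1) = 2 * (n.choose 2 : ℤ) := by
  induction n with
  | zero => simp
  | succ n ih =>
    push_cast [choose_succ_two]
    push_cast at ih
    linear_combination ih


/-- For `a ≥ 0`, `i ≥ 1`, `s ≥ 0`:
`∑_{r=1}^{i} C_q(i-1,r-1) C_q(r+s+a-1,s-1) q^{binom(r,2)+r-ir} (-1)^{i-r}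
  = q^{binom(i,2)+(i-1)a} C_q(s+a, i+a)`. -/
theorem stmt1 (a s i : ℕ) (hi : 1 ≤ i) :
    ∑ r ∈ Finset.Icc 1 i,
      qbinom ((i : ℤ) - 1) ((r : ℤ) - 1) * qbinom ((r : ℤ) + s + a - 1) ((s : ℤ) - 1)
        * q ^ (((r : ℤ) * ((r : ℤ) - 1)) / 2 + (r : ℤ) - (i : ℤ) * (r : ℤ))
        * (-1 : RatFunc ℚ) ^ (i - r)
    = q ^ (((i : ℤ) * ((i : ℤ) - 1)) / 2 + ((i : ℤ) - 1) * (a : ℤ))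
        * qbinom ((s : ℤ) + (a : ℤ)) ((i : ℤ) + (a : ℤ)) := by
  obtain ⟨m, rfl⟩ : ∃ m, i = m + 1 := ⟨i - 1, by omega⟩
  clear hi
  have hq := q_ne_zero
  set N : ℤ := (m : ℤ) + s + a with hN
  set k : ℤ := (s : ℤ) - 1 with hk
  set ci : ℤ := ((m + 1).choose 2 : ℤ) with hci
  -- Step 1: reindex the sum
  have hsum : ∑ r ∈ Finset.Icc 1 (m + 1),
      qbinom (((m+1 : ℕ) : ℤ) - 1) ((r : ℤ) - 1) * qbinom ((r : ℤ) + s + a - 1) ((s : ℤ) - 1)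
        * q ^ (((r : ℤ) * ((r : ℤ) - 1)) / 2 + (r : ℤ) - ((m+1 : ℕ) : ℤ) * (r : ℤ))
        * (-1 : RatFunc ℚ) ^ (m + 1 - r)
      = ∑ j ∈ Finset.range (m + 1),
        q ^ (-ci) * ((-1 : RatFunc ℚ) ^ j * q ^ (j.choose 2)
          * qbinom (m : ℤ) (j : ℤ) * qbinom (N - j) k) := by
    refine Finset.sum_nbij' (fun r => m + 1 - r) (fun j => m + 1 - j)
      (fun r hr => ?_) (fun j hj => ?_) (fun r hr => ?_) (fun j hj => ?_) (fun r hr => ?_)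
    · simp only [Finset.mem_Icc] at hr; simp only [Finset.mem_range]; omega
    · simp only [Finset.mem_range] at hj; simp only [Finset.mem_Icc]; omega
    · simp only [Finset.mem_Icc] at hr
      show m + 1 - (m + 1 - r) = r
      omega
    · simp only [Finset.mem_range] at hj
      show m + 1 - (m + 1 - j) = j
      omega
    · simp only [Finset.mem_Icc] at hr
      obtain ⟨hr1, hr2⟩ := hr
      have hjr : ((m + 1 - r : ℕ) : ℤ) = (m : ℤ) + 1 - r := by omega
      -- binomial 1 via symmetry
      have e1 : ((m + 1 : ℕ) : ℤ) - 1 = (m : ℤ) := by push_cast; ring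
      have e2 : (r : ℤ) - 1 = (m : ℤ) - ((m + 1 - r : ℕ) : ℤ) := by omega
      have e3 : (r : ℤ) + s + a - 1 = N - ((m + 1 - r : ℕ) : ℤ) := by
        rw [hjr, hN]; ring
      -- exponent
      have h2r := two_choose_two r
      have h2j := two_choose_two (m + 1 - r)
      have hrel : (r : ℤ) * ((r : ℤ) - 1) + 2 * (r : ℤ) - 2 * (((m+1 : ℕ) : ℤ) * (r : ℤ))
          = ((m + 1 - r : ℕ) : ℤ) * (((m + 1 - r : ℕ) : ℤ) - 1)
            - ((m+1 : ℕ) : ℤ) * (((m+1 : ℕ) : ℤ) - 1) := by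
        rw [hjr]; push_cast; ring
      have hexp : ((r : ℤ) * ((r : ℤ) - 1)) / 2 + (r : ℤ) - ((m+1 : ℕ) : ℤ) * (r : ℤ)
          = ((m + 1 - r : ℕ).choose 2 : ℤ) - ci := by
        have h2i := two_choose_two (m + 1)
        rw [hci]
        generalize hA : (r : ℤ) * ((r : ℤ) - 1) = A at h2r hrel
        generalize hB : ((m + 1 - r : ℕ) : ℤ) * (((m + 1 - r : ℕ) : ℤ) - 1) = B at h2j hrel
        generalize hC : ((m+1 : ℕ) : ℤ) * (((m+1 : ℕ) : ℤ) - 1) = C at h2i hrel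
        generalize hD : ((m+1 : ℕ) : ℤ) * (r : ℤ) = D at hrel ⊢
        omega
      rw [e1, hexp, e3, e2, qbinom_symm m, hk]
      have hsplit : (q : RatFunc ℚ) ^ ((((m + 1 - r : ℕ).choose 2 : ℕ) : ℤ) - ci)
          = q ^ ((m + 1 - r : ℕ).choose 2) * q ^ (-ci) := by
        rw [sub_eq_add_neg, zpow_add₀ hq, zpow_natCast]
      rw [hsplit]
      beta_reduce
      ring
  rw [hsum, ← Finset.mul_sum, key m N k (by rw [hN, hk]; omega)]
  -- Step 2: right-hand side
  have hNk : N - k = (m : ℤ) + a + 1 := by rw [hN, hk]; ring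
  have hsym : qbinom (N - m) (k - m) = qbinom ((s : ℤ) + a) (((m+1 : ℕ) : ℤ) + a) := by
    have e4 : N - m = ((s + a : ℕ) : ℤ) := by rw [hN]; push_cast; ring
    have e5 : ((m+1 : ℕ) : ℤ) + a = ((s + a : ℕ) : ℤ) - (k - m) := by
      rw [hk]; push_cast; ring
    rw [e4, show ((s : ℤ) + a) = ((s + a : ℕ) : ℤ) by push_cast; ring, e5]
    exact (qbinom_symm (s + a) (k - (m : ℤ))).symm
  rw [hsym, ← mul_assoc, ← zpow_add₀ hq]
  congr 2
  · -- exponents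
    have h2i := two_choose_two (m + 1)
    rw [hNk, hci]
    generalize hC : ((m+1 : ℕ) : ℤ) * (((m+1 : ℕ) : ℤ) - 1) = C at h2i ⊢
    have hrel2 : (m : ℤ) * ((m : ℤ) + a + 1) = C + (m : ℤ) * a := by
      rw [← hC]; push_cast; ring
    have hrel3 : (((m+1 : ℕ) : ℤ) - 1) * (a : ℤ) = (m : ℤ) * a := by push_cast; ring
    rw [hrel3]
    omega
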